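/- Let W_aff = ℤ^m ⋊ W_0 be the affine Weyl group of type C_m with W_0 = S_m ⋊ {±1}^m, simple reflections s_1,...,s_m of W_0 (s_i = transposition (i,i+1) for i<m, s_m = sign change in coordinate m) and affine simple reflection s_0 = translation by (1,0,...,0) composed with sign change in the first coordinate. Then for 0 ≤ p ≤ m the element w_{p,2} = ∏_{i=1}^{p} (s_0 s_1 ⋯ s_{i-1}) has length p(p+1)/2 and its image under W_aff → W_aff/W_0 is the class of the coweight μ_p = (1^{(p)}, 0^{(m-p)}). -/

import Mathlib

/-- The affine reflection of `ℝ^m` given by `x_j ↦ c - x_j` (and fixing the other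
coordinates). -/
def coordReflect (m : ℕ) (j : Fin m) (c : ℝ) : Equiv.Perm (Fin m → ℝ) :=
  Function.Involutive.toPerm (fun x => Function.update x j (c - x j)) (by
    intro x
    funext kk
    rcases eq_or_ne kk j with h | h
    · subst h; simp
    · simp [Function.update_of_ne h])

/-- The simple affine reflections `s_0, s_1, …, s_m` of the affine Weyl group of type
`C_m` acting on `ℝ^m`: `s_0 : x ↦ (1 - x_1, x_2, …)` (translation by `(1,0,…,0)`
composed with the sign change in the first coordinate), `s_i` (for `1 ≤ i ≤ m-1`) the
transposition of coordinates `i, i+1`, and `s_m` the sign change in the last coordinate. -/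
def simpleReflC (m : ℕ) (hm : 0 < m) (i : ℕ) : Equiv.Perm (Fin m → ℝ) :=
  if i = 0 then coordReflect m ⟨0, hm⟩ 1
  else if h : i < m then
    Equiv.arrowCongr (Equiv.swap (⟨i - 1, by omega⟩ : Fin m) ⟨i, h⟩) (Equiv.refl ℝ)
  else coordReflect m ⟨m - 1, by omega⟩ 0

/-- The element `w_{p,2} = ∏_{i=1}^{p} (s_0 s_1 ⋯ s_{i-1})` of the affine Weyl group of
type `C_m` (the factors composed so that the `i = 1` factor acts first). -/
def wp2 (m : ℕ) (hm : 0 < m) (p : ℕ) : Equiv.Perm (Fin m → ℝ) :=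
  (((List.range p).map
    (fun i => ((List.range (i + 1)).map (simpleReflC m hm)).prod)).reverse).prod

/-- The roots of the root system of type `C_m`, realized as functions `ℝ^m → ℝ`:
`±e_i ± e_j` (`i < j`) and `±2e_i`. -/
def rootsC (m : ℕ) : Set ((Fin m → ℝ) → ℝ) :=
  {a | (∃ i j : Fin m, i < j ∧
        (a = (fun x => x i - x j) ∨ a = (fun x => x i + x j) ∨
         a = (fun x => x j - x i) ∨ a = (fun x => -(x i) - x j))) ∨
    (∃ i : Fin m, a = (fun x => 2 * x i) ∨ a = (fun x => -(2 * x i)))}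

/-- The fundamental alcove of the affine Weyl group of type `C_m` inside the positive
Weyl chamber: `1/2 > x_1 > x_2 > ⋯ > x_m > 0`. -/
def alcoveC (m : ℕ) : Set (Fin m → ℝ) :=
  {x | (∀ i j : Fin m, i < j → x j < x i) ∧ (∀ i, 0 < x i) ∧ (∀ i, x i < 1 / 2)}

lemma factor_apply {m : ℕ} (hm : 0 < m) :
    ∀ (p : ℕ) (hpm : p < m) (x : Fin m → ℝ) (j : Fin m),
    (((List.range (p+1)).map (simpleReflC m hm)).prod) x j =
      if (j : ℕ) = 0 then 1 - x ⟨p, hpm⟩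
      else if (j : ℕ) ≤ p then x ⟨(j : ℕ) - 1, by omega⟩ else x j := by
  intro p
  induction p with
  | zero =>
    intro hpm x j
    show (([simpleReflC m hm 0]).prod) x j = _
    rw [List.prod_singleton]
    have : simpleReflC m hm 0 = coordReflect m ⟨0, hm⟩ 1 := by simp [simpleReflC]
    rw [this]
    show Function.update x ⟨0, hm⟩ (1 - x ⟨0, hm⟩) j = _
    rcases eq_or_ne (j : ℕ) 0 with h | h
    · have hj : j = ⟨0, hm⟩ := Fin.ext h
      subst hj
      simp [h]
    · rw [Function.update_of_ne (by exact fun hh => h (by rw [hh]))]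
      rw [if_neg h, if_neg (by omega)]
  | succ p IH =>
    intro hpm x j
    have hsplit : ((List.range (p+2)).map (simpleReflC m hm)).prod
        = ((List.range (p+1)).map (simpleReflC m hm)).prod * simpleReflC m hm (p+1) := by
      rw [List.range_succ, List.map_append, List.prod_append]
      simp
    rw [hsplit]
    have hpm' : p < m := by omega
    have hs : simpleReflC m hm (p+1)
        = Equiv.arrowCongr (Equiv.swap (⟨p, hpm'⟩ : Fin m) ⟨p+1, hpm⟩) (Equiv.refl ℝ) := by
      simp only [simpleReflC, if_neg (Nat.succ_ne_zero p), dif_pos hpm]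
      rfl
    show (((List.range (p+1)).map (simpleReflC m hm)).prod) (simpleReflC m hm (p+1) x) j = _
    rw [IH hpm']
    have happ : ∀ k : Fin m, (simpleReflC m hm (p+1) x) k
        = x (Equiv.swap (⟨p, hpm'⟩ : Fin m) ⟨p+1, hpm⟩ k) := by
      intro k
      rw [hs]
      simp [Equiv.arrowCongr, Equiv.swap]
    rcases eq_or_ne (j : ℕ) 0 with h0 | h0
    · rw [if_pos h0, if_pos h0, happ, Equiv.swap_apply_left]
    · rw [if_neg h0, if_neg h0]
      rcases Nat.lt_or_ge (j : ℕ) (p+1) with hle | hgt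
      · rw [if_pos (by omega), if_pos (by omega), happ,
          Equiv.swap_apply_of_ne_of_ne (by simp [Fin.ext_iff]; omega) (by simp [Fin.ext_iff]; omega)]
      · rw [if_neg (by omega)]
        rcases eq_or_ne (j : ℕ) (p+1) with he | hne
        · rw [if_pos (by omega), happ]
          have : j = ⟨p+1, hpm⟩ := Fin.ext he
          rw [this, Equiv.swap_apply_right]
          congr 1
        · rw [if_neg (by omega), happ,
            Equiv.swap_apply_of_ne_of_ne (by simp [Fin.ext_iff]; omega) (by simp [Fin.ext_iff]; omega)]

lemma wp2_apply {m : ℕ} (hm : 0 < m) :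
    ∀ (p : ℕ) (hp : p ≤ m) (x : Fin m → ℝ) (j : Fin m),
    wp2 m hm p x j =
      if (j : ℕ) < p then 1 - x ⟨p - 1 - (j : ℕ), by omega⟩ else x j := by
  intro p
  induction p with
  | zero =>
    intro hp x j
    simp [wp2]
  | succ p IH =>
    intro hp x j
    have hpm : p < m := by omega
    have hsplit : wp2 m hm (p+1)
        = ((List.range (p+1)).map (simpleReflC m hm)).prod * wp2 m hm p := by
      unfold wp2
      rw [List.range_succ, List.map_append, List.reverse_append, List.prod_append]
      simp only [List.map_cons, List.map_nil, List.reverse_cons, List.reverse_nil,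
        List.nil_append, List.prod_cons, List.prod_nil, mul_one]
      rw [List.range_succ]
    rw [hsplit]
    show (((List.range (p+1)).map (simpleReflC m hm)).prod) (wp2 m hm p x) j = _
    rw [factor_apply hm p hpm]
    rcases eq_or_ne (j : ℕ) 0 with h0 | h0
    · rw [if_pos h0, if_pos (by omega), IH (by omega), if_neg (by simp)]
      congr 2
      exact Fin.ext (by simp; omega)
    · rw [if_neg h0]
      rcases Nat.lt_or_ge (j : ℕ) (p+1) with hle | hgt
      · rw [if_pos (by omega), if_pos (by omega), IH (by omega)]
        have hlt : ((⟨(j:ℕ) - 1, by omega⟩ : Fin m) : ℕ) < p := by simp; omega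
        rw [if_pos hlt]
        congr 2
        exact Fin.ext (by simp; omega)
      · rw [if_neg (by omega), if_neg (by omega), IH (by omega), if_neg (by omega)]

lemma wp2_inv_apply {m : ℕ} (hm : 0 < m) (p : ℕ) (hp : p ≤ m) (x : Fin m → ℝ) (j : Fin m) :
    (wp2 m hm p)⁻¹ x j =
      if (j : ℕ) < p then 1 - x ⟨p - 1 - (j : ℕ), by omega⟩ else x j := by
  set f : Fin m → ℝ := fun j => if (j : ℕ) < p then 1 - x ⟨p - 1 - (j : ℕ), by omega⟩ else x j with hf
  have key : wp2 m hm p f = x := by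
    funext i
    rw [wp2_apply hm p hp]
    split_ifs with h
    · rw [hf]
      simp only []
      rw [if_pos (show ((⟨p - 1 - (i:ℕ), by omega⟩ : Fin m) : ℕ) < p by simp; omega)]
      have : (⟨p - 1 - ((⟨p - 1 - (i:ℕ), by omega⟩ : Fin m) : ℕ), by omega⟩ : Fin m) = i := by
        apply Fin.ext; simp; omega
      rw [this]; ring
    · rw [hf]; simp only []; rw [if_neg h]
  have : (wp2 m hm p)⁻¹ x = f := by
    have := congrArg (fun z => (wp2 m hm p)⁻¹ z) key
    simpa using this.symm
  rw [this]

/-- Explicit point in the fundamental alcove. -/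
noncomputable def altPt (m : ℕ) : Fin m → ℝ := fun i => ((m : ℝ) - (i : ℕ)) / (2 * m + 2)

lemma altPt_mem {m : ℕ} (hm : 0 < m) : altPt m ∈ alcoveC m := by
  have hden : (0:ℝ) < 2 * m + 2 := by positivity
  refine ⟨?_, ?_, ?_⟩
  · intro i j hij
    unfold altPt
    apply div_lt_div_of_pos_right ?_ hden
    have : ((i:ℕ):ℝ) < ((j:ℕ):ℝ) := by exact_mod_cast hij
    linarith
  · intro i
    unfold altPt
    apply div_pos ?_ hden
    have : ((i:ℕ):ℝ) < (m:ℝ) := by exact_mod_cast i.2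
    linarith
  · intro i
    unfold altPt
    rw [div_lt_iff₀ hden]
    have : (0:ℝ) ≤ ((i:ℕ):ℝ) := by positivity
    linarith

lemma int_not_Ioo_neg {k : ℤ} (h1 : (-1:ℝ) < (k:ℝ)) (h2 : (k:ℝ) < 0) : False := by
  have a1 : (-1:ℤ) < k := by exact_mod_cast h1
  have a2 : k < 0 := by exact_mod_cast h2
  omega

lemma int_not_Ioo_pos {k : ℤ} (h1 : (0:ℝ) < (k:ℝ)) (h2 : (k:ℝ) < 1) : False := by
  have a1 : (0:ℤ) < k := by exact_mod_cast h1
  have a2 : k < 1 := by exact_mod_cast h2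
  omega

lemma int_eq_one {k : ℤ} (h1 : (0:ℝ) < (k:ℝ)) (h2 : (k:ℝ) < 2) : k = 1 := by
  have a1 : (0:ℤ) < k := by exact_mod_cast h1
  have a2 : k < 2 := by exact_mod_cast h2
  omega

def idxT (m p : ℕ) : Finset (Fin m × Fin m) :=
  Finset.univ.filter (fun q => q.1 ≤ q.2 ∧ (q.2 : ℕ) < p)

def psiC (m : ℕ) : Fin m × Fin m → (((Fin m → ℝ) → ℝ) × ℤ) :=
  fun q => (fun x => -(x q.1) - x q.2, 1)

lemma idxT_card {m p : ℕ} (hm : 0 < m) (hp : p ≤ m) : (idxT m p).card = p * (p + 1) / 2 := by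
  have h2 : ∀ n : ℕ, (∑ j ∈ Finset.range n, (j + 1)) * 2 = n * (n + 1) := by
    intro n
    induction n with
    | zero => simp
    | succ n ih => rw [Finset.sum_range_succ, add_mul, ih]; ring
  have h1 : (idxT m p).card = ((Finset.range p).sigma fun j => Finset.range (j+1)).card := by
    refine Finset.card_nbij' (fun q => (⟨(q.2 : ℕ), (q.1 : ℕ)⟩ : Σ _ : ℕ, ℕ))
      (fun s => ((⟨min s.2 (m-1), by omega⟩ : Fin m), (⟨min s.1 (m-1), by omega⟩ : Fin m)))
      ?_ ?_ ?_ ?_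
    · intro q hq
      simp only [idxT, Finset.mem_coe, Finset.mem_filter, Finset.mem_univ, true_and] at hq
      simp only [Finset.mem_coe, Finset.mem_sigma, Finset.mem_range]
      refine ⟨hq.2, ?_⟩
      have : (q.1 : ℕ) ≤ (q.2 : ℕ) := hq.1
      omega
    · intro s hs
      simp only [Finset.mem_coe, Finset.mem_sigma, Finset.mem_range] at hs
      simp only [idxT, Finset.mem_coe, Finset.mem_filter, Finset.mem_univ, true_and]
      constructor
      · show (min s.2 (m-1)) ≤ (min s.1 (m-1))
        omega
      · show (min s.1 (m-1)) < p
        omega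
    · intro q hq
      simp only [idxT, Finset.mem_coe, Finset.mem_filter, Finset.mem_univ, true_and] at hq
      have hb : (q.1 : ℕ) ≤ (q.2 : ℕ) := hq.1
      have hc : (q.2 : ℕ) < p := hq.2
      refine Prod.ext (Fin.ext ?_) (Fin.ext ?_) <;> simp <;> omega
    · intro s hs
      simp only [Finset.mem_coe, Finset.mem_sigma, Finset.mem_range] at hs
      have e1 : ((⟨min s.2 (m-1), by omega⟩ : Fin m) : ℕ) = s.2 := by simp; omega
      have e2 : ((⟨min s.1 (m-1), by omega⟩ : Fin m) : ℕ) = s.1 := by simp; omega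
      show (⟨_, _⟩ : Σ _ : ℕ, ℕ) = s
      rw [e1, e2]
  rw [h1, Finset.card_sigma]
  simp only [Finset.card_range]
  have := h2 p
  omega

lemma psiC_injOn {m p : ℕ} : Set.InjOn (psiC m) (idxT m p) := by
  intro q hq q' hq' heq
  simp only [idxT, Finset.coe_filter, Set.mem_setOf_eq, Finset.mem_univ, true_and] at hq hq'
  have hf : (fun x : Fin m → ℝ => -(x q.1) - x q.2) = (fun x => -(x q'.1) - x q'.2) :=
    congrArg Prod.fst heq
  have e1 := congrFun hf (fun k : Fin m => ((k : ℕ) : ℝ))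
  have e2 := congrFun hf (fun k : Fin m => (((k : ℕ) : ℝ))^2)
  simp only [] at e1 e2
  set a := ((q.1 : ℕ) : ℝ) with ha; set b := ((q.2 : ℕ) : ℝ) with hb
  set c := ((q'.1 : ℕ) : ℝ) with hc; set d := ((q'.2 : ℕ) : ℝ) with hd
  have hab : a ≤ b := by
    rw [ha, hb]
    have : (q.1 : ℕ) ≤ (q.2 : ℕ) := hq.1
    exact_mod_cast this
  have hcd : c ≤ d := by
    rw [hc, hd]
    have : (q'.1 : ℕ) ≤ (q'.2 : ℕ) := hq'.1
    exact_mod_cast this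
  have hac : a = c := by nlinarith [sq_nonneg (a - c), sq_nonneg (b - d), sq_nonneg (a + b - c - d)]
  have hbd : b = d := by nlinarith
  rw [ha, hc] at hac
  rw [hb, hd] at hbd
  have h1 : q.1 = q'.1 := Fin.ext (by exact_mod_cast hac)
  have h2 : q.2 = q'.2 := Fin.ext (by exact_mod_cast hbd)
  exact Prod.ext h1 h2

open scoped Classical in
lemma set_eq {m p : ℕ} (hm : 0 < m) (hp : p ≤ m) :
    {q : ((Fin m → ℝ) → ℝ) × ℤ |
        q.1 ∈ rootsC m ∧
        (∀ x ∈ alcoveC m, 0 < q.1 x + (q.2 : ℝ)) ∧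
        (∀ x ∈ alcoveC m, q.1 ((wp2 m hm p)⁻¹ x) + (q.2 : ℝ) < 0)}
      = ↑((idxT m p).image (psiC m)) := by
  classical
  ext ⟨a, k⟩
  simp only [Set.mem_setOf_eq, Finset.coe_image, Set.mem_image, Finset.mem_coe]
  constructor
  · rintro ⟨hroot, hpos, hneg⟩
    obtain ⟨hmono, hzero, hhalf⟩ := altPt_mem (m := m) hm
    have Hpos := hpos _ (altPt_mem hm)
    have Hneg := hneg _ (altPt_mem hm)
    rcases hroot with ⟨i, j, hij, hcase⟩ | ⟨i, hcase⟩
    · have hij' : (i : ℕ) < (j : ℕ) := hij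
      rcases hcase with rfl | rfl | rfl | rfl <;>
        beta_reduce at Hpos Hneg <;>
        rw [wp2_inv_apply hm p hp, wp2_inv_apply hm p hp] at Hneg
      -- case a = x_i - x_j
      · exfalso
        have b1 := hhalf i; have b2 := hzero j
        rcases Nat.lt_or_ge (j : ℕ) p with hjp | hjp
        · have hip : (i:ℕ) < p := by omega
          rw [if_pos hip, if_pos hjp] at Hneg
          have hord : altPt m ⟨p - 1 - (i:ℕ), by omega⟩ < altPt m ⟨p - 1 - (j:ℕ), by omega⟩ :=
            hmono _ _ (by rw [Fin.mk_lt_mk]; omega)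
          exact int_not_Ioo_neg (by linarith) (by linarith)
        · rcases Nat.lt_or_ge (i : ℕ) p with hip | hip
          · rw [if_pos hip, if_neg (by omega)] at Hneg
            have c1 := hhalf (⟨p - 1 - (i:ℕ), by omega⟩ : Fin m)
            have c2 := hhalf j
            exact int_not_Ioo_neg (by linarith) (by linarith)
          · rw [if_neg (by omega), if_neg (by omega)] at Hneg
            linarith
      -- case a = x_i + x_j
      · exfalso
        have b1 := hzero i; have b2 := hzero j
        have b3 := hhalf i; have b4 := hhalf j
        rcases Nat.lt_or_ge (j : ℕ) p with hjp | hjp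
        · have hip : (i:ℕ) < p := by omega
          rw [if_pos hip, if_pos hjp] at Hneg
          have c1 := hhalf (⟨p - 1 - (i:ℕ), by omega⟩ : Fin m)
          have c2 := hhalf (⟨p - 1 - (j:ℕ), by omega⟩ : Fin m)
          linarith
        · rcases Nat.lt_or_ge (i : ℕ) p with hip | hip
          · rw [if_pos hip, if_neg (by omega)] at Hneg
            have c1 := hhalf (⟨p - 1 - (i:ℕ), by omega⟩ : Fin m)
            exact int_not_Ioo_neg (by linarith) (by linarith)
          · rw [if_neg (by omega), if_neg (by omega)] at Hneg
            linarith
      -- case a = x_j - x_i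
      · exfalso
        have hord0 : altPt m j < altPt m i := hmono i j hij
        rcases Nat.lt_or_ge (j : ℕ) p with hjp | hjp
        · have hip : (i:ℕ) < p := by omega
          rw [if_pos hjp, if_pos hip] at Hneg
          have hord : altPt m ⟨p - 1 - (i:ℕ), by omega⟩ < altPt m ⟨p - 1 - (j:ℕ), by omega⟩ :=
            hmono _ _ (by rw [Fin.mk_lt_mk]; omega)
          have c1 := hzero (⟨p - 1 - (i:ℕ), by omega⟩ : Fin m)
          have c2 := hhalf (⟨p - 1 - (j:ℕ), by omega⟩ : Fin m)
          exact int_not_Ioo_pos (by linarith) (by linarith)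
        · rcases Nat.lt_or_ge (i : ℕ) p with hip | hip
          · rw [if_neg (by omega), if_pos hip] at Hneg
            have c1 := hzero (⟨p - 1 - (i:ℕ), by omega⟩ : Fin m)
            have c2 := hzero j
            exact int_not_Ioo_pos (by linarith) (by linarith)
          · rw [if_neg (by omega), if_neg (by omega)] at Hneg
            linarith
      -- case a = -x_i - x_j
      · have b1 := hzero i; have b2 := hzero j
        rcases Nat.lt_or_ge (j : ℕ) p with hjp | hjp
        · have hip : (i:ℕ) < p := by omega
          rw [if_pos hip, if_pos hjp] at Hneg
          have c1 := hzero (⟨p - 1 - (i:ℕ), by omega⟩ : Fin m)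
          have c2 := hzero (⟨p - 1 - (j:ℕ), by omega⟩ : Fin m)
          have hk : k = 1 := int_eq_one (by linarith) (by linarith)
          subst hk
          exact ⟨(i, j), by simp [idxT, hij.le, hjp], rfl⟩
        · exfalso
          rcases Nat.lt_or_ge (i : ℕ) p with hip | hip
          · rw [if_pos hip, if_neg (by omega)] at Hneg
            have hord : altPt m j < altPt m ⟨p - 1 - (i:ℕ), by omega⟩ :=
              hmono _ _ (by rw [Fin.lt_def]; simp; omega)
            exact int_not_Ioo_pos (by linarith) (by linarith)
          · rw [if_neg (by omega), if_neg (by omega)] at Hneg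
            linarith
    · rcases hcase with rfl | rfl <;>
        beta_reduce at Hpos Hneg <;>
        rw [wp2_inv_apply hm p hp] at Hneg
      -- case a = 2 x_i
      · exfalso
        have b1 := hhalf i
        rcases Nat.lt_or_ge (i : ℕ) p with hip | hip
        · rw [if_pos hip] at Hneg
          have c1 := hhalf (⟨p - 1 - (i:ℕ), by omega⟩ : Fin m)
          linarith
        · rw [if_neg (by omega)] at Hneg
          linarith
      -- case a = -2 x_i
      · have b1 := hzero i
        rcases Nat.lt_or_ge (i : ℕ) p with hip | hip
        · rw [if_pos hip] at Hneg
          have c1 := hzero (⟨p - 1 - (i:ℕ), by omega⟩ : Fin m)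
          have hk : k = 1 := int_eq_one (by linarith) (by linarith)
          subst hk
          refine ⟨(i, i), by simp [idxT, hip], ?_⟩
          exact Prod.ext (funext fun x => by simp [psiC]; ring) rfl
        · exfalso
          rw [if_neg (by omega)] at Hneg
          linarith
  · rintro ⟨⟨i, j⟩, hmem, heq⟩
    obtain ⟨ha, hk⟩ := Prod.ext_iff.mp heq
    simp only [psiC] at ha hk
    subst ha; subst hk
    simp only [idxT, Finset.mem_filter, Finset.mem_univ, true_and] at hmem
    obtain ⟨hle, hjp⟩ := hmem
    have hip : (i : ℕ) < p := by
      have : (i : ℕ) ≤ (j : ℕ) := hle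
      omega
    refine ⟨?_, ?_, ?_⟩
    · rcases hle.lt_or_eq with hlt | heq
      · exact Or.inl ⟨i, j, hlt, Or.inr (Or.inr (Or.inr rfl))⟩
      · refine Or.inr ⟨i, Or.inr ?_⟩
        subst heq
        exact funext fun x => by ring
    · intro x hx
      have b1 := hx.2.2 i
      have b2 := hx.2.2 j
      show 0 < -(x i) - x j + ((1 : ℤ) : ℝ)
      push_cast
      linarith
    · intro x hx
      show -(((wp2 m hm p)⁻¹ x) i) - ((wp2 m hm p)⁻¹ x) j + ((1 : ℤ) : ℝ) < 0
      rw [wp2_inv_apply hm p hp, wp2_inv_apply hm p hp, if_pos hip, if_pos hjp]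
      have b1 := hx.2.2 (⟨p - 1 - (i:ℕ), by omega⟩ : Fin m)
      have b2 := hx.2.2 (⟨p - 1 - (j:ℕ), by omega⟩ : Fin m)
      push_cast
      linarith

/-- In the affine Weyl group `W_aff = ℤ^m ⋊ (S_m ⋊ {±1}^m)` of type
`C_m`, for `0 ≤ p ≤ m` the element `w_{p,2} = ∏_{i=1}^{p} (s_0 s_1 ⋯ s_{i-1})` has length
`p(p+1)/2` (its length being the number of affine roots positive on the fundamental
alcove made negative by it), and its image under `W_aff → W_aff/W₀` is the class of the
coweight `μ_p = (1^{(p)}, 0^{(m-p)})` (equivalently, `w_{p,2}(0) = μ_p`, `W₀` being the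
stabilizer of the origin). -/
theorem wp2_length_and_translation_class (m p : ℕ) (hm : 0 < m) (hp : p ≤ m) :
    Set.ncard {q : ((Fin m → ℝ) → ℝ) × ℤ |
        q.1 ∈ rootsC m ∧
        (∀ x ∈ alcoveC m, 0 < q.1 x + (q.2 : ℝ)) ∧
        (∀ x ∈ alcoveC m, q.1 ((wp2 m hm p)⁻¹ x) + (q.2 : ℝ) < 0)} = p * (p + 1) / 2 ∧
      (wp2 m hm p) 0 = (fun i : Fin m => if (i : ℕ) < p then (1 : ℝ) else 0) := by
  classical
  constructor
  · rw [set_eq hm hp, Set.ncard_coe_finset, Finset.card_image_of_injOn psiC_injOn,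
      idxT_card hm hp]
  · funext i
    rw [show (wp2 m hm p) 0 i = _ from wp2_apply hm p hp 0 i]
    split_ifs <;> simp
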